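/- Let n ≥ 2, r > 0, and let Ω ⊂ ℝ^n be a bounded open set containing B_r(0). Then Ω ∈ S_r if and only if there exists ε > 0 such that for every x ∈ ∂Ω the exterior cone EC(x,r) := (x + C(x, θ_x)) ∩ B_ε(x) is contained in Ωᶜ, where θ_x := arcsin(r/|x|) and C(x,θ) := { y : ⟨x,y⟩ ≥ cos θ · |x|·|y| }. -/

import Mathlib

open MeasureTheory Metric Set
open scoped ENNReal RealInnerProductSpace

noncomputable section

/-- `Ω` is a bounded open set, star-shaped with respect to the ball `B_r(0)`. -/
def StarShaped (n : ℕ) (r : ℝ) (Ω : Set (EuclideanSpace ℝ (Fin n))) : Prop :=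
  IsOpen Ω ∧ Bornology.IsBounded Ω ∧
    ∀ y ∈ ball (0 : EuclideanSpace ℝ (Fin n)) r, ∀ x ∈ Ω, segment ℝ y x ⊆ Ω

/-- The cone `C(x,θ) = { y : ⟨x,y⟩ ≥ cos θ |x||y| }`. -/
def cone (n : ℕ) (x : EuclideanSpace ℝ (Fin n)) (θ : ℝ) :
    Set (EuclideanSpace ℝ (Fin n)) :=
  {y | Real.cos θ * (‖x‖ * ‖y‖) ≤ ⟪x, y⟫}

/-- The exterior cone `EC(x,r) = (x + C(x,θ_x)) ∩ B_ε(x)`, with `θ_x = arcsin(r/|x|)`. -/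
def exteriorCone (n : ℕ) (r ε : ℝ) (x : EuclideanSpace ℝ (Fin n)) :
    Set (EuclideanSpace ℝ (Fin n)) :=
  ((fun y => x + y) '' cone n x (Real.arcsin (r / ‖x‖))) ∩ ball x ε

lemma cos_arcsin_mul {r R : ℝ} (hr : 0 < r) (hrR : r ≤ R) :
    Real.cos (Real.arcsin (r / R)) * R = Real.sqrt (R ^ 2 - r ^ 2) := by
  have hR : 0 < R := lt_of_lt_of_le hr hrR
  rw [Real.cos_arcsin, show (1 : ℝ) - (r / R) ^ 2 = (R ^ 2 - r ^ 2) / R ^ 2 by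
    field_simp, Real.sqrt_div (by nlinarith), Real.sqrt_sq hR.le]
  field_simp

lemma keyIneq {E : Type*} [NormedAddCommGroup E] [InnerProductSpace ℝ E]
    {r s : ℝ} {y d p : E} (hr : 0 < r) (hp : r ≤ ‖p‖) (hy : ‖y‖ < r) (hs : 0 ≤ s)
    (hpd : p = y + s • d) :
    Real.sqrt (‖p‖ ^ 2 - r ^ 2) * ‖d‖ ≤ ⟪p, d⟫ := by
  by_cases hd : d = 0
  · simp [hd]
  have hdn : 0 < ‖d‖ := norm_pos_iff.mpr hd
  set a : ℝ := ⟪p, d⟫ with ha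
  set b : ℝ := ⟪y, d⟫ with hb
  have hdp : (⟪d, p⟫ : ℝ) = a := (real_inner_comm p d).trans ha.symm
  have hdy : (⟪d, y⟫ : ℝ) = b := (real_inner_comm y d).trans hb.symm
  have hpa : a = b + s * ‖d‖ ^ 2 := by
    rw [ha, hb, hpd, inner_add_left, real_inner_smul_left, real_inner_self_eq_norm_sq]
  have hpp : ‖p‖ ^ 2 = ⟪y, p⟫ + s * a := by
    rw [← real_inner_self_eq_norm_sq]
    nth_rewrite 1 [hpd]
    rw [inner_add_left, real_inner_smul_left, hdp]
  have hyp : ⟪y, p⟫ ≤ ‖y‖ * ‖p‖ := real_inner_le_norm y p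
  have hpn : 0 < ‖p‖ := lt_of_lt_of_le hr hp
  have ha0 : 0 ≤ a := by nlinarith
  set v : E := ‖d‖ ^ 2 • p - a • d with hv
  have hv1 : ⟪v, v⟫ = ‖d‖ ^ 2 * (‖d‖ ^ 2 * ‖p‖ ^ 2 - a ^ 2) := by
    simp only [hv, inner_sub_left, inner_sub_right, real_inner_smul_left,
      real_inner_smul_right]
    simp only [real_inner_self_eq_norm_sq, hdp, ← ha]
    ring
  have hv2 : v = ‖d‖ ^ 2 • y - b • d := by
    rw [hv, hpd, hpa]; module
  have hv3 : ⟪v, v⟫ = ‖d‖ ^ 2 * (‖d‖ ^ 2 * ‖y‖ ^ 2 - b ^ 2) := by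
    rw [hv2]
    simp only [inner_sub_left, inner_sub_right, real_inner_smul_left,
      real_inner_smul_right]
    simp only [real_inner_self_eq_norm_sq, hdy, ← hb]
    ring
  have heq : ‖d‖ ^ 2 * ‖p‖ ^ 2 - a ^ 2 = ‖d‖ ^ 2 * ‖y‖ ^ 2 - b ^ 2 :=
    mul_left_cancel₀ (pow_ne_zero 2 hdn.ne') (hv1.symm.trans hv3)
  have hy2 : ‖y‖ ^ 2 < r ^ 2 := by nlinarith [norm_nonneg y]
  have hsq : (‖p‖ ^ 2 - r ^ 2) * ‖d‖ ^ 2 ≤ a ^ 2 := by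
    nlinarith [sq_nonneg b, mul_pos (pow_pos hdn 2) (sub_pos.mpr hy2)]
  have h0 : 0 ≤ ‖p‖ ^ 2 - r ^ 2 := by nlinarith
  calc Real.sqrt (‖p‖ ^ 2 - r ^ 2) * ‖d‖
      = Real.sqrt ((‖p‖ ^ 2 - r ^ 2) * ‖d‖ ^ 2) := by
        rw [Real.sqrt_mul h0, Real.sqrt_sq (norm_nonneg d)]
    _ ≤ Real.sqrt (a ^ 2) := Real.sqrt_le_sqrt hsq
    _ = a := by rw [Real.sqrt_sq ha0]

set_option maxHeartbeats 1000000 in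
/-- A bounded open set `Ω` containing `B_r(0)` belongs to `S_r` if and only if there is
`ε > 0` such that for every boundary point `x ∈ ∂Ω` the exterior cone `EC(x,r)` is
contained in `Ωᶜ`. -/
theorem statement10 (n : ℕ) (hn : 2 ≤ n) (r : ℝ) (hr : 0 < r)
    (Ω : Set (EuclideanSpace ℝ (Fin n))) (hopen : IsOpen Ω)
    (hbdd : Bornology.IsBounded Ω) (hball : ball (0 : EuclideanSpace ℝ (Fin n)) r ⊆ Ω) :
    StarShaped n r Ω ↔ ∃ ε : ℝ, 0 < ε ∧ ∀ x ∈ frontier Ω, exteriorCone n r ε x ⊆ Ωᶜ := by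
  constructor
  · -- forward direction
    rintro ⟨-, -, hstar⟩
    refine ⟨1, one_pos, ?_⟩
    rintro x hx z ⟨⟨u, hu, rfl⟩, -⟩ hzΩ
    -- hzΩ : x + u ∈ Ω, derive a contradiction
    have hxnot : x ∉ Ω := fun h => hx.2 (by rwa [hopen.interior_eq])
    have hR : r ≤ ‖x‖ := by
      by_contra h
      push_neg at h
      exact hxnot (hball (mem_ball_zero_iff.mpr h))
    have hR0 : 0 < ‖x‖ := lt_of_lt_of_le hr hR
    set c : ℝ := Real.sqrt (‖x‖ ^ 2 - r ^ 2) with hc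
    have hcu : c * ‖u‖ ≤ ⟪x, u⟫ := by
      have := hu
      rw [cone, mem_setOf_eq] at this
      calc c * ‖u‖ = Real.cos (Real.arcsin (r / ‖x‖)) * ‖x‖ * ‖u‖ := by
            rw [cos_arcsin_mul hr hR]
        _ = Real.cos (Real.arcsin (r / ‖x‖)) * (‖x‖ * ‖u‖) := by ring
        _ ≤ ⟪x, u⟫ := this
    have hc0 : 0 ≤ c := Real.sqrt_nonneg _
    have hc2 : c ^ 2 = ‖x‖ ^ 2 - r ^ 2 := Real.sq_sqrt (by nlinarith)
    have hcR : c ≤ ‖x‖ := by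
      rw [hc]
      calc Real.sqrt (‖x‖ ^ 2 - r ^ 2) ≤ Real.sqrt (‖x‖ ^ 2) :=
            Real.sqrt_le_sqrt (by nlinarith)
        _ = ‖x‖ := Real.sqrt_sq (norm_nonneg x)
    obtain ⟨δ, hδ, hballz⟩ := Metric.isOpen_iff.mp hopen _ hzΩ
    set t : ℝ := δ / (2 * ‖x‖) with htdef
    have ht : 0 < t := by positivity
    set u' : EuclideanSpace ℝ (Fin n) := u + t • x with hu'
    have hz' : x + u' ∈ Ω := by
      apply hballz
      rw [mem_ball]
      show dist (x + u') (x + u) < δ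
      rw [dist_eq_norm]
      have h0 : x + u' - (x + u) = t • x := by rw [hu']; module
      rw [h0, norm_smul, Real.norm_eq_abs, abs_of_pos ht]
      have h2 : t * ‖x‖ = δ / 2 := by rw [htdef]; field_simp
      rw [h2]
      linarith
    have hI0 : 0 ≤ ⟪x, u⟫ := le_trans (by positivity) hcu
    have hA : (⟪x, u'⟫ : ℝ) = ⟪x, u⟫ + t * ‖x‖ ^ 2 := by
      rw [hu', inner_add_right, real_inner_smul_right, real_inner_self_eq_norm_sq]
    have hA0 : 0 < ⟪x, u'⟫ := by
      rw [hA]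
      nlinarith [mul_pos ht (pow_pos hR0 2)]
    have hu'n : ‖u'‖ ^ 2 = ‖u‖ ^ 2 + 2 * (t * ⟪x, u⟫) + t ^ 2 * ‖x‖ ^ 2 := by
      rw [hu', norm_add_sq_real, real_inner_smul_right, real_inner_comm u x,
        norm_smul, Real.norm_eq_abs, abs_of_pos ht, mul_pow]
      try ring
    have hCS : (⟪x, u⟫ : ℝ) ≤ ‖x‖ * ‖u‖ := real_inner_le_norm x u
    have hkey : (‖x‖ ^ 2 - r ^ 2) * ‖u'‖ ^ 2 < ⟪x, u'⟫ ^ 2 := by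
      rw [hA, hu'n, ← hc2]
      have h1 : (0:ℝ) ≤ (⟪x, u⟫ - c * ‖u‖) * (⟪x, u⟫ + c * ‖u‖) :=
        mul_nonneg (by linarith)
          (by have := mul_nonneg hc0 (norm_nonneg u); linarith)
      have h2 : (0:ℝ) ≤ t * ⟪x, u⟫ * r ^ 2 :=
        mul_nonneg (mul_nonneg ht.le hI0) (sq_nonneg r)
      have h3 : (0:ℝ) < t ^ 2 * ‖x‖ ^ 2 * r ^ 2 := by positivity
      nlinarith [h1, h2, h3]
    have hu'0 : u' ≠ 0 := by
      intro h
      rw [h] at hA0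
      simp at hA0
    have hNu : 0 < ‖u'‖ ^ 2 := pow_pos (norm_pos_iff.mpr hu'0) 2
    set lam : ℝ := ⟪x, u'⟫ / ‖u'‖ ^ 2 with hlam
    have hlam0 : 0 < lam := div_pos hA0 hNu
    set w : EuclideanSpace ℝ (Fin n) := x - lam • u' with hw
    have hlamN : lam * ‖u'‖ ^ 2 = ⟪x, u'⟫ := by
      rw [hlam]
      field_simp
    have hwn : ‖w‖ ^ 2 < r ^ 2 := by
      have hexp : ‖w‖ ^ 2 = ‖x‖ ^ 2 - 2 * (lam * ⟪x, u'⟫) + lam ^ 2 * ‖u'‖ ^ 2 := by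
        rw [hw, norm_sub_sq_real, real_inner_smul_right, norm_smul, Real.norm_eq_abs,
          abs_of_pos hlam0, mul_pow]
        try ring
      have hwexp : ‖w‖ ^ 2 = ‖x‖ ^ 2 - lam ^ 2 * ‖u'‖ ^ 2 := by
        rw [hexp]
        linear_combination (2 * lam) * hlamN
      have hsub : ⟪x, u'⟫ ^ 2 = lam ^ 2 * (‖u'‖ ^ 2 * ‖u'‖ ^ 2) := by
        rw [← hlamN]; ring
      rw [hwexp]
      nlinarith [hkey, hNu, hsub]
    have hwball : w ∈ ball (0 : EuclideanSpace ℝ (Fin n)) r := by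
      rw [mem_ball_zero_iff]
      nlinarith [norm_nonneg w]
    have hseg : x ∈ segment ℝ w (x + u') := by
      have h1l : (0:ℝ) < 1 + lam := by linarith
      refine ⟨1 / (1 + lam), lam / (1 + lam), by positivity, by positivity, ?_, ?_⟩
      · field_simp
      · rw [hw]
        match_scalars <;> (field_simp; try ring)
    exact hxnot (hstar w hwball (x + u') hz' hseg)
  · -- reverse direction
    rintro ⟨ε, hε, hEC⟩
    refine ⟨hopen, hbdd, ?_⟩
    intro y hy x hx z hz
    by_contra hzΩ
    have hyΩ : y ∈ Ω := hball hy
    have hyn : ‖y‖ < r := mem_ball_zero_iff.mp hy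
    set d : EuclideanSpace ℝ (Fin n) := x - y with hd
    by_cases hd0 : d = 0
    · have hxy : x = y := by rwa [hd, sub_eq_zero] at hd0
      rw [hxy, segment_same] at hz
      exact hzΩ (hz ▸ hyΩ)
    have hdn : 0 < ‖d‖ := norm_pos_iff.mpr hd0
    obtain ⟨A, B, hA, hB, hAB, hzeq⟩ := hz
    have hzc : z = y + B • d := by
      rw [← hzeq, hd, show A = 1 - B by linarith]
      module
    set S : Set ℝ := {t : ℝ | t ∈ Icc (0 : ℝ) 1 ∧ y + t • d ∉ Ω} with hS
    have hSne : S.Nonempty := ⟨B, ⟨hB, by linarith⟩, by rw [← hzc]; exact hzΩ⟩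
    have hSeq : S = Icc (0 : ℝ) 1 ∩ (fun t : ℝ => y + t • d) ⁻¹' Ωᶜ := by
      ext t; simp [hS, mem_preimage, mem_compl_iff, and_comm]
    have hScpt : IsCompact S := by
      rw [hSeq]
      exact isCompact_Icc.inter_right
        (hopen.isClosed_compl.preimage (by continuity))
    set ts : ℝ := sSup S with hts
    have htS : ts ∈ S := hScpt.sSup_mem hSne
    set p : EuclideanSpace ℝ (Fin n) := y + ts • d with hp
    have hpΩ : p ∉ Ω := htS.2
    have ht0 : 0 ≤ ts := htS.1.1
    have ht1' : ts ≤ 1 := htS.1.2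
    have ht1 : ts < 1 := by
      rcases lt_or_eq_of_le ht1' with h | h
      · exact h
      · exfalso
        apply hpΩ
        rw [hp, h, one_smul, hd]
        simpa using hx
    have hpr : r ≤ ‖p‖ := by
      by_contra h
      push_neg at h
      exact hpΩ (hball (mem_ball_zero_iff.mpr h))
    have hSbdd : BddAbove S := ⟨1, fun t ht => ht.1.2⟩
    have key : ∀ ρ : ℝ, 0 < ρ → ∃ t', ts < t' ∧ t' ≤ 1 ∧ y + t' • d ∈ Ω ∧
        ‖(y + t' • d) - p‖ < ρ := by
      intro ρ hρ
      have hρd : 0 < ρ / (2 * ‖d‖) := by positivity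
      refine ⟨min 1 (ts + ρ / (2 * ‖d‖)), lt_min ht1 (by linarith), min_le_left _ _,
        ?_, ?_⟩
      · by_contra h
        have hmem : min 1 (ts + ρ / (2 * ‖d‖)) ∈ S :=
          ⟨⟨le_min (by norm_num) (by linarith), min_le_left _ _⟩, h⟩
        have := le_csSup hSbdd hmem
        have hlt : ts < min 1 (ts + ρ / (2 * ‖d‖)) := lt_min ht1 (by linarith)
        rw [← hts] at this
        linarith
      · have heq : (y + min 1 (ts + ρ / (2 * ‖d‖)) • d) - p =
            (min 1 (ts + ρ / (2 * ‖d‖)) - ts) • d := by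
          rw [hp]; module
        rw [heq, norm_smul, Real.norm_eq_abs,
          abs_of_pos (sub_pos.mpr (lt_min ht1 (by linarith)))]
        have h1 : min 1 (ts + ρ / (2 * ‖d‖)) - ts ≤ ρ / (2 * ‖d‖) := by
          have := min_le_right 1 (ts + ρ / (2 * ‖d‖))
          linarith
        calc (min 1 (ts + ρ / (2 * ‖d‖)) - ts) * ‖d‖ ≤ ρ / (2 * ‖d‖) * ‖d‖ :=
              mul_le_mul_of_nonneg_right h1 (norm_nonneg d)
          _ = ρ / 2 := by field_simp
          _ < ρ := by linarith
    have hpfront : p ∈ frontier Ω := by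
      rw [frontier, hopen.interior_eq]
      refine ⟨Metric.mem_closure_iff.mpr fun ρ hρ => ?_, hpΩ⟩
      obtain ⟨t', -, -, hqΩ, hqn⟩ := key ρ hρ
      exact ⟨y + t' • d, hqΩ, by rwa [dist_comm, dist_eq_norm]⟩
    obtain ⟨t', htlt, -, hqΩ, hqn⟩ := key ε hε
    have hq : y + t' • d ∈ exteriorCone n r ε p := by
      constructor
      · refine ⟨(t' - ts) • d, ?_, ?_⟩
        · rw [cone, mem_setOf_eq]
          have hk : Real.sqrt (‖p‖ ^ 2 - r ^ 2) * ‖d‖ ≤ ⟪p, d⟫ :=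
            keyIneq hr hpr hyn ht0 hp
          have hcos : Real.cos (Real.arcsin (r / ‖p‖)) * ‖p‖ =
              Real.sqrt (‖p‖ ^ 2 - r ^ 2) := cos_arcsin_mul hr hpr
          have hts' : 0 ≤ t' - ts := by linarith
          calc Real.cos (Real.arcsin (r / ‖p‖)) * (‖p‖ * ‖(t' - ts) • d‖)
              = (t' - ts) * (Real.sqrt (‖p‖ ^ 2 - r ^ 2) * ‖d‖) := by
                rw [norm_smul, Real.norm_eq_abs, abs_of_nonneg hts', ← hcos]; ring
            _ ≤ (t' - ts) * ⟪p, d⟫ := mul_le_mul_of_nonneg_left hk hts'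
            _ = ⟪p, (t' - ts) • d⟫ := (real_inner_smul_right p d (t' - ts)).symm
        · rw [hp]; module
      · rw [mem_ball, dist_eq_norm]
        exact hqn
    exact (hEC p hpfront hq) hqΩ
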